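/- Let M_u ∈ ℝ^{n_u×n_u}, M_z, W_z ∈ ℝ^{n_z×n_z} be symmetric with W_z invertible, α_d > 0, and for i = 1,…,N and j = 1,…,n_u let μ_i > 0, λ_j > 0, s_i ∈ ℝ, y_i ∈ ℝ^{n_z}, and x_j ∈ ℝ^{n_u}. Define ψ_{i,j} = (1/√(μ_i λ_j)) (s_i x_j ; x_j ⊗ W_z^{-1} M_z y_i) ∈ ℝ^{n_u(n_z+1)}, let Ψ be the matrix whose columns are the ψ_{i,j}, let D be the diagonal matrix with corresponding entries μ_i/(μ_i + α_d λ_j), and for z ∈ ℝ^{n_z} let A(z) = (I_{n_u}, I_{n_u} ⊗ zᵀM_z). Then tr(A(z) Ψ D Ψᵀ A(z)ᵀ M_u) = Σ_{i=1}^{N} Σ_{j=1}^{n_u} (x_jᵀ M_u x_j)/(λ_j (μ_i + α_d λ_j)) · (s_i + zᵀ M_z W_z^{-1} M_z y_i)². -/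

import Mathlib

open Matrix

/-- The discrepancy forward operator `A(z) = (I_{nu}, I_{nu} ⊗ zᵀMz)`. -/
noncomputable def Aop {nu nz : ℕ} (Mz : Matrix (Fin nz) (Fin nz) ℝ) (z : Fin nz → ℝ) :
    Matrix (Fin nu) (Fin nu ⊕ Fin nu × Fin nz) ℝ :=
  Matrix.of fun i q =>
    Sum.elim (fun i' => (1 : Matrix (Fin nu) (Fin nu) ℝ) i i')
      (fun p => (1 : Matrix (Fin nu) (Fin nu) ℝ) i p.1 * (z ᵥ* Mz) p.2) q

/-- Closed form for the design-dependent part of the OED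
criterion:
`tr(A(z) Ψ D Ψᵀ A(z)ᵀ Mu) = Σ_{i,j} (x_jᵀ Mu x_j)/(λ_j (μ_i + α_d λ_j)) (s_i + zᵀ Mz Wz⁻¹ Mz y_i)²`. -/
theorem oed_criterion_closed_form
    {nu nz N : ℕ}
    (Mu : Matrix (Fin nu) (Fin nu) ℝ) (Mz Wz : Matrix (Fin nz) (Fin nz) ℝ)
    (hMu : Mu.IsSymm) (hMz : Mz.IsSymm) (hWz : Wz.IsSymm) (hWzinv : IsUnit Wz.det)
    (αd : ℝ) (hαd : 0 < αd)
    (μ : Fin N → ℝ) (lam : Fin nu → ℝ) (hμ : ∀ i, 0 < μ i) (hlam : ∀ j, 0 < lam j)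
    (s : Fin N → ℝ) (y : Fin N → Fin nz → ℝ) (x : Fin nu → Fin nu → ℝ)
    (ψ : Fin N → Fin nu → (Fin nu ⊕ Fin nu × Fin nz) → ℝ)
    (hψ : ∀ i j, ψ i j = (1 / Real.sqrt (μ i * lam j)) •
      Sum.elim (s i • x j) (fun p => x j p.1 * (Wz⁻¹ *ᵥ (Mz *ᵥ y i)) p.2))
    (Ψmat : Matrix (Fin nu ⊕ Fin nu × Fin nz) (Fin N × Fin nu) ℝ)
    (hΨmat : Ψmat = Matrix.of fun q p => ψ p.1 p.2 q)
    (z : Fin nz → ℝ) :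
    (Aop (nu := nu) Mz z * Ψmat *
        Matrix.diagonal (fun p : Fin N × Fin nu => μ p.1 / (μ p.1 + αd * lam p.2)) *
        Ψmatᵀ * (Aop (nu := nu) Mz z)ᵀ * Mu).trace
      = ∑ i : Fin N, ∑ j : Fin nu,
          (x j ⬝ᵥ (Mu *ᵥ x j)) / (lam j * (μ i + αd * lam j)) *
            (s i + z ⬝ᵥ (Mz *ᵥ (Wz⁻¹ *ᵥ (Mz *ᵥ y i)))) ^ 2 := by
  classical
  set M : Matrix (Fin nu) (Fin N × Fin nu) ℝ := Aop (nu := nu) Mz z * Ψmat with hMdef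
  set d : (Fin N × Fin nu) → ℝ := fun p => μ p.1 / (μ p.1 + αd * lam p.2) with hd
  have hM : ∀ (a : Fin nu) (p : Fin N × Fin nu),
      M a p = (1 / Real.sqrt (μ p.1 * lam p.2)) *
        (x p.2 a * (s p.1 + z ⬝ᵥ (Mz *ᵥ (Wz⁻¹ *ᵥ (Mz *ᵥ y p.1))))) := by
    intro a p
    have hdot : (z ᵥ* Mz) ⬝ᵥ (Wz⁻¹ *ᵥ (Mz *ᵥ y p.1))
        = z ⬝ᵥ (Mz *ᵥ (Wz⁻¹ *ᵥ (Mz *ᵥ y p.1))) := (dotProduct_mulVec z Mz _).symm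
    rw [← hdot]
    simp only [hMdef, Matrix.mul_apply, Aop, hΨmat, hψ, Matrix.of_apply,
      Fintype.sum_sum_type, Sum.elim_inl, Sum.elim_inr, Pi.smul_apply, smul_eq_mul,
      Fintype.sum_prod_type, Matrix.one_apply, ite_mul, one_mul, zero_mul,
      Finset.sum_ite_eq, Finset.mem_univ, if_true, dotProduct]
    rw [Finset.sum_comm]
    simp only [Finset.sum_ite_eq, Finset.mem_univ, if_true]
    simp only [mul_add, Finset.mul_sum]
    congr 1
    · ring
    · exact Finset.sum_congr rfl fun k _ => by ring
  have hrw : M * Matrix.diagonal d * Ψmatᵀ * (Aop (nu := nu) Mz z)ᵀ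
      = M * Matrix.diagonal d * Mᵀ := by
    rw [Matrix.mul_assoc, ← Matrix.transpose_mul, hMdef]
  rw [hrw]
  have tr_eq : (M * Matrix.diagonal d * Mᵀ * Mu).trace
      = ∑ p : Fin N × Fin nu, (∑ b, (∑ a, M a p * Mu a b) * M b p) * d p := by
    rw [Matrix.mul_assoc (M * Matrix.diagonal d), Matrix.trace_mul_comm]
    simp only [Matrix.trace, Matrix.diag, Matrix.mul_apply, Matrix.transpose_apply,
      Matrix.diagonal_apply, mul_ite, mul_zero, Finset.sum_ite_eq', Finset.mem_univ,
      if_true, Matrix.of_apply]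
    refine Finset.sum_congr rfl fun p _ => ?_
    rw [Finset.sum_mul]
    exact Finset.sum_congr rfl fun b _ => by ring
  rw [tr_eq, Fintype.sum_prod_type]
  refine Finset.sum_congr rfl fun i _ => Finset.sum_congr rfl fun j _ => ?_
  set e := 1 / Real.sqrt (μ i * lam j) with hedef
  set c := s i + z ⬝ᵥ (Mz *ᵥ (Wz⁻¹ *ᵥ (Mz *ᵥ y i))) with hcdef
  have hml : 0 < μ i * lam j := mul_pos (hμ i) (hlam j)
  have he : e * e = 1 / (μ i * lam j) := by
    rw [hedef, div_mul_div_comm, one_mul, Real.mul_self_sqrt hml.le]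
  have hx : x j ⬝ᵥ (Mu *ᵥ x j) = ∑ b, (∑ a, x j a * Mu a b) * x j b := by
    simp only [dotProduct, mulVec, Finset.mul_sum, Finset.sum_mul]
    rw [Finset.sum_comm]
    exact Finset.sum_congr rfl fun b _ => Finset.sum_congr rfl fun a _ => by ring
  have h1 : ∀ b, (∑ a, M a (i, j) * Mu a b) * M b (i, j)
      = (e * e) * (c * c) * ((∑ a, x j a * Mu a b) * x j b) := by
    intro b
    simp only [hM]
    rw [← hedef, ← hcdef, Finset.sum_mul, Finset.sum_mul, Finset.mul_sum]
    exact Finset.sum_congr rfl fun a _ => by ring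
  simp only [h1]
  rw [← Finset.mul_sum, ← hx, he]
  simp only [hd]
  have h2 : lam j ≠ 0 := (hlam j).ne'
  have h3 : μ i ≠ 0 := (hμ i).ne'
  have h4 : μ i + αd * lam j ≠ 0 := (add_pos (hμ i) (mul_pos hαd (hlam j))).ne'
  field_simp
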